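/- Let p be a prime and let 1 → A → B →(λ) C → 1 be a split short exact sequence with section σ : C → B such that B is a p-almost direct product of A and C. Define the set map τ : B → B by τ(b) = (σ(λ(b)))⁻¹ · b. Then for every n ≥ 1 one has τ(γ_n^p B) ⊆ γ_n^p A. -/

import Mathlib

open scoped commutatorElement

/-- The lower `F_p`-linear central filtration `(γₙᵖ G)ₙ` of a group `G`:
`gammaP p 1 = ⊤` (i.e. `γ₁ᵖ G = G`) and `γ_{n+1}ᵖ G` is the subgroup generated by
`[G, γₙᵖ G] ∪ {xᵖ : x ∈ γₙᵖ G}`.  (The value at `0` is junk, set to `⊤`.) -/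
def gammaP (p : ℕ) {G : Type*} [Group G] : ℕ → Subgroup G
  | 0 => ⊤
  | 1 => ⊤
  | n + 2 =>
    Subgroup.closure
      ({x : G | ∃ g y : G, y ∈ gammaP p (n + 1) ∧ x = ⁅g, y⁆} ∪
       {x : G | ∃ y : G, y ∈ gammaP p (n + 1) ∧ x = y ^ p})

section Generic

variable {p : ℕ} {G : Type*} [Group G]

private lemma comm_mul_left' (a b y : G) : ⁅a * b, y⁆ = a * ⁅b, y⁆ * a⁻¹ * ⁅a, y⁆ := by group
private lemma comm_inv_left' (a y : G) : ⁅a⁻¹, y⁆ = a⁻¹ * ⁅a, y⁆⁻¹ * a := by group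
private lemma comm_mul_right' (x a b : G) : ⁅x, a * b⁆ = ⁅x, a⁆ * (a * ⁅x, b⁆ * a⁻¹) := by group

private lemma hall_witt (a b c : G) :
    ⁅⁅a,b⁆, b*c*b⁻¹⁆ * ⁅⁅b,c⁆, c*a*c⁻¹⁆ * ⁅⁅c,a⁆, a*b*a⁻¹⁆ = 1 := by group

lemma mem_gammaP_comm {n : ℕ} (g : G) {y : G} (hy : y ∈ gammaP p n) :
    ⁅g, y⁆ ∈ gammaP p (n + 1) := by
  cases n with
  | zero => exact Subgroup.mem_top _
  | succ n =>
    rw [gammaP]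
    exact Subgroup.subset_closure (Or.inl ⟨g, y, hy, rfl⟩)

lemma mem_gammaP_comm' {n : ℕ} (g : G) {y : G} (hy : y ∈ gammaP p n) :
    ⁅y, g⁆ ∈ gammaP p (n + 1) := by
  have := inv_mem (mem_gammaP_comm g hy)
  rwa [commutatorElement_inv] at this

lemma mem_gammaP_pow {n : ℕ} {y : G} (hy : y ∈ gammaP p n) :
    y ^ p ∈ gammaP p (n + 1) := by
  cases n with
  | zero => exact Subgroup.mem_top _
  | succ n =>
    rw [gammaP]
    exact Subgroup.subset_closure (Or.inr ⟨y, hy, rfl⟩)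

lemma gammaP_map {H : Type*} [Group H] (φ : G →* H) :
    ∀ (n : ℕ) {x : G}, x ∈ gammaP p n → φ x ∈ gammaP p n := by
  intro n
  induction n with
  | zero => intro x _; exact Subgroup.mem_top _
  | succ n ih =>
    cases n with
    | zero => intro x _; exact Subgroup.mem_top _
    | succ m =>
      intro x hx
      rw [gammaP] at hx
      induction hx using Subgroup.closure_induction with
      | mem z hz =>
        rcases hz with ⟨g, y, hy, rfl⟩ | ⟨y, hy, rfl⟩
        · rw [map_commutatorElement]
          exact mem_gammaP_comm _ (ih hy)
        · rw [map_pow]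
          exact mem_gammaP_pow (ih hy)
      | one => rw [map_one]; exact one_mem _
      | mul a b _ _ ha hb => rw [map_mul]; exact mul_mem ha hb
      | inv a _ ha => rw [map_inv]; exact inv_mem ha

lemma gammaP_normal (n : ℕ) : (gammaP p n (G := G)).Normal := by
  constructor
  intro x hx g
  have := gammaP_map (MulAut.conj g).toMonoidHom n hx
  simpa using this

private lemma comm_pow_eq (z y : G) (h : ⁅z, ⁅z,y⁆⁆ = 1) :
    ∀ k : ℕ, ⁅z ^ k, y⁆ = ⁅z, y⁆ ^ k := by
  have hcomm : Commute z ⁅z, y⁆ := commutatorElement_eq_one_iff_mul_comm.mp h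
  intro k
  induction k with
  | zero => simp [pow_zero]
  | succ k ih =>
    rw [pow_succ, comm_mul_left', ih]
    have h2 : z ^ k * ⁅z, y⁆ = ⁅z, y⁆ * z ^ k := (hcomm.pow_left k)
    rw [show z ^ k * ⁅z,y⁆ * (z ^ k)⁻¹ = ⁅z,y⁆ from by rw [h2]; group]
    rw [← pow_succ']

private lemma quot_eq_one_iff (N : Subgroup G) [N.Normal] (w : G) :
    (QuotientGroup.mk' N) w = 1 ↔ w ∈ N := by
  simpa using QuotientGroup.eq_one_iff (N := N) w

private lemma pow_comm_mem (z y : G) (N : Subgroup G) [N.Normal]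
    (h1 : ⁅z, ⁅z,y⁆⁆ ∈ N) (h2 : ⁅z,y⁆ ^ p ∈ N) : ⁅z ^ p, y⁆ ∈ N := by
  set π := QuotientGroup.mk' N with hπ
  have hq : ⁅π z, ⁅π z, π y⁆⁆ = 1 := by
    rw [← map_commutatorElement, ← map_commutatorElement]
    exact (quot_eq_one_iff N _).mpr h1
  rw [← quot_eq_one_iff N, map_commutatorElement, map_pow, comm_pow_eq _ _ hq,
    ← map_commutatorElement, ← map_pow]
  exact (quot_eq_one_iff N _).mpr h2

private lemma pow_mul_mem (v a : G) (N : Subgroup G) [N.Normal]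
    (h1 : ⁅v, a⁆ ∈ N) (h2 : a ^ p ∈ N) : (v ^ p)⁻¹ * (v * a) ^ p ∈ N := by
  set π := QuotientGroup.mk' N with hπ
  have hq : ⁅π v, π a⁆ = 1 := by
    rw [← map_commutatorElement]; exact (quot_eq_one_iff N _).mpr h1
  have hcomm : Commute (π v) (π a) := commutatorElement_eq_one_iff_mul_comm.mp hq
  rw [← quot_eq_one_iff N, map_mul, map_inv, map_pow, map_pow, map_mul,
    hcomm.mul_pow]
  rw [show (π v ^ p)⁻¹ * (π v ^ p * π a ^ p) = π a ^ p from by group, ← map_pow]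
  exact (quot_eq_one_iff N _).mpr h2

/-- strong centrality: `⁅γ_{i+1}, γ_{j+1}⁆ ⊆ γ_{i+j+2}` -/
lemma gammaP_comm_mem :
    ∀ (i j : ℕ) {x y : G}, x ∈ gammaP p (i+1) → y ∈ gammaP p (j+1) →
      ⁅x, y⁆ ∈ gammaP p (i+j+2) := by
  intro i
  induction i with
  | zero =>
    intro j x y _ hy
    simpa [Nat.zero_add] using mem_gammaP_comm (p := p) x hy
  | succ i ih =>
    intro j x y hx hy
    haveI := gammaP_normal (p := p) (G := G) (i+1+j+2)
    rw [gammaP] at hx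
    induction hx using Subgroup.closure_induction with
    | mem z hz =>
      rcases hz with ⟨g, z, hz, rfl⟩ | ⟨z, hz, rfl⟩
      · -- Hall-Witt case
        set c := z⁻¹ * y * z with hc_def
        have hc : c ∈ gammaP p (j+1) := by
          have := (gammaP_normal (p := p) (j+1)).conj_mem y hy z⁻¹
          simpa [hc_def] using this
        have hy' : z * c * z⁻¹ = y := by rw [hc_def]; group
        have e1 : ⁅z, c⁆ ∈ gammaP p (i+j+2) := ih j hz hc
        have t1 : ⁅⁅z,c⁆, c*g*c⁻¹⁆ ∈ gammaP p (i+1+j+2) := by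
          have h := mem_gammaP_comm' (p := p) (c*g*c⁻¹) e1
          rwa [show i+j+2+1 = i+1+j+2 from by omega] at h
        have e2 : ⁅c, g⁆ ∈ gammaP p (j+2) := mem_gammaP_comm' g hc
        have hz' : g * z * g⁻¹ ∈ gammaP p (i+1) :=
          (gammaP_normal (p := p) (i+1)).conj_mem z hz g
        have t2 : ⁅⁅c,g⁆, g*z*g⁻¹⁆ ∈ gammaP p (i+1+j+2) := by
          have h := ih (j+1) hz' e2
          have h2 := inv_mem h
          rw [commutatorElement_inv] at h2
          rwa [show i+(j+1)+2 = i+1+j+2 from by omega] at h2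
        have hw := hall_witt g z c
        rw [hy'] at hw
        rw [mul_assoc] at hw
        have hkey := eq_inv_of_mul_eq_one_left hw
        rw [hkey]
        exact inv_mem (mul_mem t1 t2)
      · -- p-th power case
        apply pow_comm_mem
        · have h := mem_gammaP_comm (p := p) z (ih j hz hy)
          rwa [show i+j+2+1 = i+1+j+2 from by omega] at h
        · have h := mem_gammaP_pow (p := p) (ih j hz hy)
          rwa [show i+j+2+1 = i+1+j+2 from by omega] at h
    | one => simpa using one_mem (gammaP p (i+1+j+2) (G := G))
    | mul a b _ _ ha hb =>
      rw [comm_mul_left']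
      exact mul_mem ((gammaP_normal _).conj_mem _ hb a) ha
    | inv a _ ha =>
      rw [comm_inv_left']
      have := (gammaP_normal (p := p) (i+1+j+2)).conj_mem _ (inv_mem ha) a⁻¹
      simpa [mul_assoc] using this

/-- an endomorphism acting trivially mod `γ₂` acts trivially on all graded pieces -/
lemma gammaP_aut (θ : G →* G) (h1 : ∀ g : G, g⁻¹ * θ g ∈ gammaP p 2) :
    ∀ (n : ℕ) {a : G}, a ∈ gammaP p (n+1) → a⁻¹ * θ a ∈ gammaP p (n+2) := by
  intro n
  induction n with
  | zero => intro a _; exact h1 a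
  | succ n ih =>
    intro a ha
    haveI := gammaP_normal (p := p) (G := G) (n+3)
    set π := QuotientGroup.mk' (gammaP p (n+3) (G := G)) with hπ
    suffices h : π (θ a) = π a by
      rw [show n+1+2 = n+3 from by omega, ← quot_eq_one_iff (gammaP p (n+3)),
        map_mul, map_inv, h]
      exact inv_mul_cancel _
    rw [gammaP] at ha
    induction ha using Subgroup.closure_induction with
    | mem z hz =>
      rcases hz with ⟨g, y, hy, rfl⟩ | ⟨y, hy, rfl⟩
      · -- commutator generator
        have hu : g⁻¹ * θ g ∈ gammaP p 2 := h1 g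
        have hw : y⁻¹ * θ y ∈ gammaP p (n+2) := ih hy
        have hθg : θ g = g * (g⁻¹ * θ g) := by group
        have hθy : θ y = y * (y⁻¹ * θ y) := by group
        set u := g⁻¹ * θ g
        set w := y⁻¹ * θ y
        have c1 : π ⁅u, y⁆ = 1 := by
          rw [quot_eq_one_iff]
          have := gammaP_comm_mem 1 n hu hy
          rwa [show 1+n+2 = n+3 from by omega] at this
        have c2 : π ⁅g, w⁆ = 1 := by
          rw [quot_eq_one_iff]; exact mem_gammaP_comm _ hw
        have c3 : π ⁅u, w⁆ = 1 := by
          rw [quot_eq_one_iff]; exact mem_gammaP_comm _ hw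
        rw [map_commutatorElement, hθg, hθy]
        rw [comm_mul_right' (g*u) y w, comm_mul_left' g u y, comm_mul_left' g u w]
        simp only [map_mul, map_inv, c1, c2, c3, one_mul, mul_one]
        group
      · -- power generator
        have hw : y⁻¹ * θ y ∈ gammaP p (n+2) := ih hy
        have hθy : θ y = y * (y⁻¹ * θ y) := by group
        set w := y⁻¹ * θ y
        have hcomm : Commute (π y) (π w) := by
          apply commutatorElement_eq_one_iff_mul_comm.mp
          rw [← map_commutatorElement, quot_eq_one_iff]
          exact mem_gammaP_comm _ hw
        have hwp : π w ^ p = 1 := by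
          rw [← map_pow, quot_eq_one_iff]
          exact mem_gammaP_pow hw
        rw [show θ (y ^ p) = (y * w) ^ p from by rw [map_pow, hθy]]
        rw [map_pow, map_pow, map_mul, hcomm.mul_pow, hwp, mul_one]
    | one => simp
    | mul a b _ _ ha hb => rw [map_mul, map_mul, map_mul, ha, hb]
    | inv a _ ha => rw [map_inv, map_inv, map_inv, ha]

end Generic

section Ker

variable {p : ℕ} {B C : Type*} [Group B] [Group C]

/-- the image in `B` of the filtration of the kernel -/
def Kf (p : ℕ) (f : B →* C) (n : ℕ) : Subgroup B :=
  (gammaP p n : Subgroup ↥f.ker).map f.ker.subtype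

lemma mem_Kf_iff (f : B →* C) {n : ℕ} {w : ↥f.ker} :
    (w : B) ∈ Kf p f n ↔ w ∈ (gammaP p n : Subgroup ↥f.ker) := by
  constructor
  · rintro ⟨x, hx, hxe⟩
    have : x = w := Subtype.ext hxe
    rwa [← this]
  · intro h
    exact ⟨w, h, rfl⟩

lemma Kf_one_eq (f : B →* C) : Kf p f 1 = f.ker := by
  rw [Kf, show (gammaP p 1 : Subgroup ↥f.ker) = ⊤ from rfl,
    ← MonoidHom.range_eq_map, Subgroup.range_subtype]

/-- conjugation of `B` on the kernel, as a monoid hom of the kernel -/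
def conjKer (f : B →* C) (b : B) : ↥f.ker →* ↥f.ker where
  toFun x := ⟨b⁻¹ * (x : B) * b, by
    have : b⁻¹ * (x : B) * (b⁻¹)⁻¹ ∈ f.ker := f.normal_ker.conj_mem _ x.2 b⁻¹
    simpa using this⟩
  map_one' := by ext; simp
  map_mul' x y := by ext; simp; group

lemma Kf_normal (f : B →* C) (n : ℕ) : (Kf p f n).Normal := by
  constructor
  rintro x ⟨w, hw, rfl⟩ b
  have := gammaP_map (conjKer f b⁻¹) n hw
  refine ⟨conjKer f b⁻¹ w, this, ?_⟩
  simp [conjKer]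

lemma Kf_pow (f : B →* C) {n : ℕ} {w : B} (hw : w ∈ Kf p f n) :
    w ^ p ∈ Kf p f (n+1) := by
  obtain ⟨x, hx, rfl⟩ := hw
  exact ⟨x ^ p, mem_gammaP_pow hx, by rw [map_pow]⟩

lemma Kf_comm_ker (f : B →* C) {t w : B} (ht : t ∈ f.ker) (hw : w ∈ f.ker) :
    ⁅t, w⁆ ∈ Kf p f 2 := by
  refine ⟨⁅(⟨t, ht⟩ : ↥f.ker), (⟨w, hw⟩ : ↥f.ker)⁆, ?_, ?_⟩
  · exact mem_gammaP_comm _ (Subgroup.mem_top _)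
  · rw [map_commutatorElement]; rfl

variable (f : B →* C) (s : C →* B) (hs : ∀ c, f (s c) = c)
  (hadp : ∀ a ∈ f.ker, ∀ c : C,
      s c * a * (s c)⁻¹ * a⁻¹ ∈ (gammaP p 2 : Subgroup ↥f.ker).map f.ker.subtype)

include hs hadp

/-- base case: commutators of `B` with the kernel lie in `Kf 2` -/
lemma Kf_comm_base : ∀ (b : B) {w : B}, w ∈ f.ker → ⁅b, w⁆ ∈ Kf p f 2 := by
  intro b w hw
  haveI := Kf_normal (p := p) f 2
  have ht : (s (f b))⁻¹ * b ∈ f.ker := by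
    rw [MonoidHom.mem_ker, map_mul, map_inv, hs]
    simp
  have hb : b = s (f b) * ((s (f b))⁻¹ * b) := by group
  rw [hb, comm_mul_left']
  apply mul_mem
  · exact (Kf_normal f 2).conj_mem _ (Kf_comm_ker f ht hw) _
  · have := hadp w hw (f b)
    rwa [show ⁅s (f b), w⁆ = s (f b) * w * (s (f b))⁻¹ * w⁻¹ from commutatorElement_def _ _]

/-- commutators of `B` with `Kf (n+1)` lie in `Kf (n+2)` -/
lemma Kf_comm : ∀ (n : ℕ) (b : B) {w : B}, w ∈ Kf p f (n+1) → ⁅b, w⁆ ∈ Kf p f (n+2) := by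
  have h1 : ∀ b : B, ∀ x : ↥f.ker, x⁻¹ * (conjKer f b) x ∈ (gammaP p 2 : Subgroup ↥f.ker) := by
    intro b x
    rw [← mem_Kf_iff (p := p) f]
    have hcoe : ((x⁻¹ * (conjKer f b) x : ↥f.ker) : B) = ⁅(x : B)⁻¹, b⁻¹⁆ := by
      simp [conjKer]; group
    rw [hcoe]
    have h := Kf_comm_base f s hs hadp b⁻¹ (inv_mem x.2)
    have h2 := inv_mem h
    rwa [commutatorElement_inv] at h2
  intro n b w hw
  obtain ⟨x, hx, rfl⟩ := hw
  have := gammaP_aut (conjKer f b) (h1 b) n (inv_mem hx)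
  have hmem : ((x⁻¹)⁻¹ * (conjKer f b) x⁻¹ : ↥f.ker) ∈ (gammaP p (n+2) : Subgroup ↥f.ker) := by
    simpa using this
  have hmemB : ((x : B)) * (b⁻¹ * (x : B)⁻¹ * b) ∈ Kf p f (n+2) := by
    have := (mem_Kf_iff (p := p) f).mpr hmem
    simpa [conjKer] using this
  haveI := Kf_normal (p := p) f (n+2)
  have : b * ((x : B) * (b⁻¹ * (x : B)⁻¹ * b)) * b⁻¹ ∈ Kf p f (n+2) :=
    (Kf_normal f (n+2)).conj_mem _ hmemB b
  rwa [show b * ((x : B) * (b⁻¹ * (x : B)⁻¹ * b)) * b⁻¹ = ⁅b, (x : B)⁆ from by group] at this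

/-- mixed strong centrality: `⁅s(γ_{i+1} C), Kf (j+1)⁆ ⊆ Kf (i+j+2)` -/
lemma Kf_mixed : ∀ (i j : ℕ) {c : C} {a : B}, c ∈ gammaP p (i+1) → a ∈ Kf p f (j+1) →
    ⁅s c, a⁆ ∈ Kf p f (i+j+2) := by
  intro i
  induction i with
  | zero =>
    intro j c a _ ha
    have := Kf_comm f s hs hadp j (s c) ha
    rwa [show j+2 = 0+j+2 from by omega] at this
  | succ i ih =>
    intro j c a hc ha
    haveI := Kf_normal (p := p) f (i+1+j+2)
    rw [gammaP] at hc
    induction hc using Subgroup.closure_induction with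
    | mem z hz =>
      rcases hz with ⟨d, e, he, rfl⟩ | ⟨e, he, rfl⟩
      · -- commutator generator, Hall-Witt
        rw [map_commutatorElement]
        set u := s d
        set v := s e
        set c' := v⁻¹ * a * v with hc'_def
        have hc' : c' ∈ Kf p f (j+1) := by
          have := (Kf_normal f (j+1)).conj_mem a ha v⁻¹
          simpa [hc'_def] using this
        have ha' : v * c' * v⁻¹ = a := by rw [hc'_def]; group
        have e1 : ⁅v, c'⁆ ∈ Kf p f (i+j+2) := ih j he hc'
        have t1 : ⁅⁅v,c'⁆, c'*u*c'⁻¹⁆ ∈ Kf p f (i+1+j+2) := by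
          have h := Kf_comm f s hs hadp (i+j+1) (c'*u*c'⁻¹) (by
            rwa [show i+j+2 = i+j+1+1 from by omega] at e1)
          have h2 := inv_mem h
          rw [commutatorElement_inv] at h2
          rwa [show i+j+1+2 = i+1+j+2 from by omega] at h2
        have e2 : ⁅c', u⁆ ∈ Kf p f (j+2) := by
          have h := Kf_comm f s hs hadp j u hc'
          have h2 := inv_mem h
          rwa [commutatorElement_inv] at h2
        have hded : d * e * d⁻¹ ∈ gammaP p (i+1) :=
          (gammaP_normal (p := p) (i+1)).conj_mem e he d
        have t2 : ⁅⁅c',u⁆, u*v*u⁻¹⁆ ∈ Kf p f (i+1+j+2) := by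
          have huvu : u * v * u⁻¹ = s (d * e * d⁻¹) := by
            rw [map_mul, map_mul, map_inv]
          have h := ih (j+1) hded e2
          have h2 := inv_mem h
          rw [commutatorElement_inv] at h2
          rw [← huvu] at h2
          rwa [show i+(j+1)+2 = i+1+j+2 from by omega] at h2
        have hw := hall_witt u v c'
        rw [ha'] at hw
        rw [mul_assoc] at hw
        have hkey := eq_inv_of_mul_eq_one_left hw
        rw [hkey]
        exact inv_mem (mul_mem t1 t2)
      · -- power generator
        rw [map_pow]
        apply pow_comm_mem
        · have h1 : ⁅s e, a⁆ ∈ Kf p f (i+j+2) := ih j he ha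
          have h := Kf_comm f s hs hadp (i+j+1) (s e) (by
            rwa [show i+j+2 = i+j+1+1 from by omega] at h1)
          rwa [show i+j+1+2 = i+1+j+2 from by omega] at h
        · have h := Kf_pow f (ih j he ha)
          rwa [show i+j+2+1 = i+1+j+2 from by omega] at h
    | one => rw [map_one]; simpa using one_mem (Kf p f (i+1+j+2))
    | mul c₁ c₂ _ _ h₁ h₂ =>
      rw [map_mul, comm_mul_left']
      exact mul_mem ((Kf_normal f _).conj_mem _ h₂ _) h₁
    | inv c₁ _ h₁ =>
      rw [map_inv, comm_inv_left']
      have := (Kf_normal (p := p) f (i+1+j+2)).conj_mem _ (inv_mem h₁) (s c₁)⁻¹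
      simpa [mul_assoc] using this

end Ker

/-- If `B` is a `p`-almost direct product of `A = ker f` and `C` (with section `s`), and
`τ : B → B` is defined by `τ(b) = (s(f(b)))⁻¹ * b`, then `τ(γₙᵖ B) ⊆ γₙᵖ A` for all `n ≥ 1`. -/
theorem statement3 (p : ℕ) (hp : p.Prime)
    {B C : Type*} [Group B] [Group C]
    (f : B →* C) (hf : Function.Surjective f)
    (s : C →* B) (hs : ∀ c, f (s c) = c)
    (hadp : ∀ a ∈ f.ker, ∀ c : C,
      s c * a * (s c)⁻¹ * a⁻¹ ∈ (gammaP p 2 : Subgroup ↥f.ker).map f.ker.subtype)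
    (τ : B → B) (hτ : ∀ b, τ b = (s (f b))⁻¹ * b) :
    ∀ n : ℕ, 1 ≤ n → ∀ b ∈ (gammaP p n : Subgroup B),
      τ b ∈ (gammaP p n : Subgroup ↥f.ker).map f.ker.subtype := by
  have key : ∀ (m : ℕ) (b : B), b ∈ gammaP p (m+1) →
      f b ∈ gammaP p (m+1) ∧ (s (f b))⁻¹ * b ∈ Kf p f (m+1) := by
    intro m
    induction m with
    | zero =>
      intro b _
      refine ⟨Subgroup.mem_top _, ?_⟩
      rw [Kf_one_eq, MonoidHom.mem_ker, map_mul, map_inv, hs]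
      simp
    | succ m ih =>
      intro b hb
      haveI := Kf_normal (p := p) f (m+2)
      rw [gammaP] at hb
      induction hb using Subgroup.closure_induction with
      | mem z hz =>
        rcases hz with ⟨g, y, hy, rfl⟩ | ⟨y, hy, rfl⟩
        · -- commutator generator
          obtain ⟨hc, ha⟩ := ih y hy
          constructor
          · rw [map_commutatorElement]
            exact mem_gammaP_comm _ hc
          · set π := QuotientGroup.mk' (Kf p f (m+2)) with hπ
            set v := s (f y)
            set u := s (f g)
            set a := (s (f y))⁻¹ * y with ha_def
            set x := (s (f g))⁻¹ * g with hx_def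
            have hxker : x ∈ Kf p f 1 := by
              rw [Kf_one_eq, MonoidHom.mem_ker, hx_def, map_mul, map_inv, hs]
              simp
            have hfa : ⁅g, a⁆ ∈ Kf p f (m+2) := Kf_comm f s hs hadp m g ha
            have hxv : ⁅v, x⁆ ∈ Kf p f (m+2) := by
              have := Kf_mixed f s hs hadp m 0 hc hxker
              rwa [show m+0+2 = m+2 from by omega] at this
            have hgoal : π ⁅g, y⁆ = π ⁅u, v⁆ := by
              have hy2 : y = v * a := by rw [ha_def]; exact (mul_inv_cancel_left _ _).symm
              have hg2 : g = u * x := by rw [hx_def]; exact (mul_inv_cancel_left _ _).symm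
              calc π ⁅g, y⁆ = π ⁅g, v * a⁆ := by rw [← hy2]
                _ = π ⁅g, v⁆ * (π v * π ⁅g, a⁆ * (π v)⁻¹) := by
                    rw [comm_mul_right']
                    simp [map_mul, map_commutatorElement]
                _ = π ⁅g, v⁆ := by
                    rw [(quot_eq_one_iff _ _).mpr hfa]; group
                _ = π ⁅u * x, v⁆ := by rw [← hg2]
                _ = π u * π ⁅x, v⁆ * (π u)⁻¹ * π ⁅u, v⁆ := by
                    rw [comm_mul_left']
                    simp [map_mul, map_commutatorElement]
                _ = π ⁅u, v⁆ := by
                    have : π ⁅x, v⁆ = 1 := by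
                      have h2 := inv_mem hxv
                      rw [commutatorElement_inv] at h2
                      exact (quot_eq_one_iff _ _).mpr h2
                    rw [this]; group
            have hfin : (s (f ⁅g, y⁆))⁻¹ * ⁅g, y⁆ = ⁅u, v⁆⁻¹ * ⁅g, y⁆ := by
              rw [map_commutatorElement, map_commutatorElement]
            rw [hfin, ← quot_eq_one_iff (Kf p f (m+2)), map_mul, map_inv, hgoal]
            exact inv_mul_cancel _
        · -- power generator
          obtain ⟨hc, ha⟩ := ih y hy
          constructor
          · rw [map_pow]
            exact mem_gammaP_pow hc
          · set v := s (f y)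
            set a := (s (f y))⁻¹ * y with ha_def
            have hy2 : y = v * a := by rw [ha_def]; exact (mul_inv_cancel_left _ _).symm
            have hfin : (s (f (y^p)))⁻¹ * y^p = (v^p)⁻¹ * (v * a)^p := by
              rw [map_pow, map_pow, ← hy2]
            rw [hfin]
            exact pow_mul_mem v a (Kf p f (m+2))
              (Kf_comm f s hs hadp m v ha) (Kf_pow f ha)
      | one =>
        constructor
        · rw [map_one]; exact one_mem _
        · simpa using one_mem (Kf p f (m+2))
      | mul b₁ b₂ _ _ h₁ h₂ =>
        obtain ⟨hc₁, ha₁⟩ := h₁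
        obtain ⟨hc₂, ha₂⟩ := h₂
        constructor
        · rw [map_mul]; exact mul_mem hc₁ hc₂
        · have hfin : (s (f (b₁ * b₂)))⁻¹ * (b₁ * b₂) =
              ((s (f b₂))⁻¹ * ((s (f b₁))⁻¹ * b₁) * ((s (f b₂))⁻¹)⁻¹) * ((s (f b₂))⁻¹ * b₂) := by
            rw [map_mul, map_mul]; group
          rw [hfin]
          exact mul_mem ((Kf_normal f (m+2)).conj_mem _ ha₁ (s (f b₂))⁻¹) ha₂
      | inv b₁ _ h₁ =>
        obtain ⟨hc₁, ha₁⟩ := h₁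
        constructor
        · rw [map_inv]; exact inv_mem hc₁
        · have hfin : (s (f b₁⁻¹))⁻¹ * b₁⁻¹ = b₁ * ((s (f b₁))⁻¹ * b₁)⁻¹ * b₁⁻¹ := by
            rw [map_inv, map_inv]; group
          rw [hfin]
          exact (Kf_normal f (m+2)).conj_mem _ (inv_mem ha₁) b₁
  intro n hn b hb
  obtain ⟨m, rfl⟩ : ∃ m, n = m + 1 := ⟨n - 1, by omega⟩
  rw [hτ]
  exact (key m b hb).2
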